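/- (ZFC-provable core of Theorem 3.5.) Let t ≥ 1, k ≥ 2, let E ⊂ ℕ be finite with |E| = p ≥ 2 and e₀ = min(E), let f : D → ℕ with E^k ⊆ D ⊂ ℕ^k be regressively regular over E, let γ : E^k → ℤ be arbitrary, and let ρ : E^k → ℕ be t-log bounded over E^k with ρ(x) > min(x) for all x ∈ E^k_2. Let H_p = Δ[f]E^k_0 ∪ Δ[f]E^k_1 ∪ Δ[f]E^k_2. Then: (i) Δ[f]E^k_1 = ∅; (ii) H_p has a nonempty subset summing to 0 if and only if some pair (A', B'), not both empty, with A' ⊆ Δ[f]E^k_0 and B' ⊆ {y ∈ Δ[f]E^k_2 : y < e₀ · k^k}, satisfies ∑A' + ∑B' = 0; and (iii) the number of such pairs (A', B') is at most 2^{k^k} · (p^k)^t. -/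
import Mathlib


/-- The minimum coordinate of a tuple `x : Fin k → ℕ`. -/
noncomputable def minT {k : ℕ} (x : Fin k → ℕ) : ℕ := sInf (Set.range x)

/-- The cube `E^k`, viewed as a set of `k`-tuples of naturals. -/
def cube (k : ℕ) (E : Finset ℕ) : Set (Fin k → ℕ) := {x | ∀ i, x i ∈ E}

/-- Two `k`-tuples of naturals are *order equivalent* if their coordinates compare
(`<` and `=`) in exactly the same positions. -/
def OrdEquiv {k : ℕ} (x y : Fin k → ℕ) : Prop :=
  ∀ i j : Fin k, (x i < x j ↔ y i < y j) ∧ (x i = x j ↔ y i = y j)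

/-- `f` is regressively regular over `E`: for each order-type equivalence class of
`k`-tuples of `E^k`, either `f` is constant on the class with value `< min E`, or
`f x ≥ min x` for every `x` of the class. -/
def RegressivelyRegular {k : ℕ} (f : (Fin k → ℕ) → ℕ) (E : Finset ℕ) : Prop :=
  ∀ x ∈ cube k E,
    (∀ y ∈ cube k E, OrdEquiv x y → f y = f x ∧ f y < sInf (E : Set ℕ)) ∨
    (∀ y ∈ cube k E, OrdEquiv x y → minT y ≤ f y)

/-- The block `E^k_0 = {x ∈ E^k : f(x) < min E}`. -/
noncomputable def Eblock0 (k : ℕ) (f : (Fin k → ℕ) → ℕ) (E : Finset ℕ) : Set (Fin k → ℕ) :=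
  {x ∈ cube k E | f x < sInf (E : Set ℕ)}

/-- The block `E^k_1 = {x ∈ E^k : min E ≤ f(x) < min x}`. -/
noncomputable def Eblock1 (k : ℕ) (f : (Fin k → ℕ) → ℕ) (E : Finset ℕ) : Set (Fin k → ℕ) :=
  {x ∈ cube k E | sInf (E : Set ℕ) ≤ f x ∧ f x < minT x}

/-- The block `E^k_2 = {x ∈ E^k : min x ≤ f(x)}`. -/
noncomputable def Eblock2 (k : ℕ) (f : (Fin k → ℕ) → ℕ) (E : Finset ℕ) : Set (Fin k → ℕ) :=
  {x ∈ cube k E | minT x ≤ f x}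

/-- The set of integers `Δ[f]E^k_0 = {f(x) − min E : x ∈ E^k_0}`. -/
noncomputable def Delta0 (k : ℕ) (f : (Fin k → ℕ) → ℕ) (E : Finset ℕ) : Set ℤ :=
  {z | ∃ x ∈ Eblock0 k f E, z = (f x : ℤ) - ((sInf (E : Set ℕ) : ℕ) : ℤ)}

/-- The set of integers `Δ[f]E^k_2 = {ρ(x) − min(x) : x ∈ E^k_2}`. -/
noncomputable def Delta2 (k : ℕ) (ρ : (Fin k → ℕ) → ℕ) (f : (Fin k → ℕ) → ℕ)
    (E : Finset ℕ) : Set ℤ :=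
  {z | ∃ x ∈ Eblock2 k f E, z = (ρ x : ℤ) - (minT x : ℤ)}

/-- `ρ` is `t`-log bounded over `E^k` (`|E| = p`):
`|{ρ(x) − min(x) : 0 < ρ(x) − min(x) < e₀·k^k, x ∈ E^k}| ≤ t·log₂(p^k)` where `e₀ = min E`. -/
noncomputable def TLogBounded (t k : ℕ) (E : Finset ℕ) (ρ : (Fin k → ℕ) → ℕ) : Prop :=
  ({d : ℕ | ∃ x ∈ cube k E, ρ x - minT x = d ∧ 0 < d ∧
      d < sInf (E : Set ℕ) * k ^ k}.ncard : ℝ) ≤ (t : ℝ) * Real.logb 2 ((E.card : ℝ) ^ k)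

/-- The set of integers `Δ[f]E^k_1 = {γ(x) : x ∈ E^k_1}`. -/
noncomputable def Delta1 (k : ℕ) (γ : (Fin k → ℕ) → ℤ) (f : (Fin k → ℕ) → ℕ)
    (E : Finset ℕ) : Set ℤ :=
  {z | ∃ x ∈ Eblock1 k f E, γ x = z}


/-- rank of coordinate i -/
def rankF {k : ℕ} (x : Fin k → ℕ) (i : Fin k) : ℕ :=
  (Finset.univ.filter fun j => x j < x i).card

lemma rankF_lt_of_lt {k : ℕ} (x : Fin k → ℕ) {i j : Fin k} (h : x i < x j) :
    rankF x i < rankF x j := by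
  apply Finset.card_lt_card
  constructor
  · intro a ha
    simp only [Finset.mem_filter, Finset.mem_univ, true_and] at ha ⊢
    exact ha.trans h
  · intro hsub
    have : i ∈ Finset.univ.filter fun a => x a < x j := by simp [h]
    have h2 := hsub this
    simp only [Finset.mem_filter, Finset.mem_univ, true_and] at h2
    omega

lemma rankF_eq_of_eq {k : ℕ} (x : Fin k → ℕ) {i j : Fin k} (h : x i = x j) :
    rankF x i = rankF x j := by
  unfold rankF
  congr 1
  ext a
  simp [h]

lemma lt_iff_rankF {k : ℕ} (x : Fin k → ℕ) (i j : Fin k) :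
    x i < x j ↔ rankF x i < rankF x j := by
  constructor
  · exact rankF_lt_of_lt x
  · intro h
    rcases lt_trichotomy (x i) (x j) with h' | h' | h'
    · exact h'
    · exact absurd (rankF_eq_of_eq x h') (by omega)
    · exact absurd (rankF_lt_of_lt x h') (by omega)

lemma eq_iff_rankF {k : ℕ} (x : Fin k → ℕ) (i j : Fin k) :
    x i = x j ↔ rankF x i = rankF x j := by
  constructor
  · exact rankF_eq_of_eq x
  · intro h
    rcases lt_trichotomy (x i) (x j) with h' | h' | h'
    · exact absurd (rankF_lt_of_lt x h') (by omega)
    · exact h'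
    · exact absurd (rankF_lt_of_lt x h') (by omega)

lemma rankF_lt_k {k : ℕ} (x : Fin k → ℕ) (i : Fin k) : rankF x i < k := by
  have h1 : rankF x i ≤ (Finset.univ.erase i).card := by
    apply Finset.card_le_card
    intro a ha
    simp only [Finset.mem_filter, Finset.mem_univ, true_and] at ha
    simp only [Finset.mem_erase, Finset.mem_univ, and_true]
    rintro rfl; omega
  have h2 : (Finset.univ.erase i).card = k - 1 := by
    rw [Finset.card_erase_of_mem (Finset.mem_univ i)]
    simp
  have := i.pos
  omega

lemma ordEquiv_of_rankF {k : ℕ} (x y : Fin k → ℕ) (h : rankF x = rankF y) :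
    OrdEquiv x y := by
  intro i j
  constructor
  · rw [lt_iff_rankF x, lt_iff_rankF y, h]
  · rw [eq_iff_rankF x, eq_iff_rankF y, h]

lemma sInf_le_minT {k : ℕ} (hk : 0 < k) (E : Finset ℕ) (x : Fin k → ℕ)
    (hx : x ∈ cube k E) : sInf (E : Set ℕ) ≤ minT x := by
  have hne : (Set.range x).Nonempty := ⟨x ⟨0, hk⟩, ⟨_, rfl⟩⟩
  obtain ⟨i, hi⟩ := Nat.sInf_mem hne
  rw [minT, ← hi]
  exact Nat.sInf_le (hx i)

lemma eblock0_const {k : ℕ} (hk : 0 < k) {f : (Fin k → ℕ) → ℕ} {E : Finset ℕ}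
    (hrr : RegressivelyRegular f E) {x y : Fin k → ℕ}
    (hx : x ∈ Eblock0 k f E) (hy : y ∈ cube k E) (hxy : OrdEquiv x y) :
    f y = f x := by
  obtain ⟨hxc, hxf⟩ := hx
  rcases hrr x hxc with h | h
  · exact (h y hy hxy).1
  · have hself : minT x ≤ f x := h x hxc (fun i j => ⟨Iff.rfl, Iff.rfl⟩)
    have := sInf_le_minT hk E x hxc
    omega

lemma delta0_fin_card {k : ℕ} (hk : 0 < k) {f : (Fin k → ℕ) → ℕ} {E : Finset ℕ}
    (hrr : RegressivelyRegular f E) :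
    (Delta0 k f E).Finite ∧ (Delta0 k f E).ncard ≤ k ^ k := by
  classical
  set F : ℤ → (Fin k → Fin k) := fun z =>
    if h : z ∈ Delta0 k f E then (fun i => ⟨rankF h.choose i, rankF_lt_k _ _⟩)
    else fun i => i with hF
  have hinj : Set.InjOn F (Delta0 k f E) := by
    intro z1 h1 z2 h2 heq
    rw [hF] at heq
    simp only [dif_pos h1, dif_pos h2] at heq
    have hrk : rankF h1.choose = rankF h2.choose := by
      funext i
      have := congrFun heq i
      simpa [Fin.mk.injEq] using this
    have hoe := ordEquiv_of_rankF _ _ hrk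
    obtain ⟨hx1, hz1⟩ := h1.choose_spec
    obtain ⟨hx2, hz2⟩ := h2.choose_spec
    have : f h2.choose = f h1.choose := eblock0_const hk hrr hx1 hx2.1 hoe
    omega
  have hmaps : ∀ z ∈ Delta0 k f E, F z ∈ (Set.univ : Set (Fin k → Fin k)) :=
    fun z _ => Set.mem_univ _
  constructor
  · exact Set.Finite.of_finite_image (Set.toFinite _) hinj
  · have := Set.ncard_le_ncard_of_injOn F hmaps hinj Set.finite_univ
    simpa [Set.ncard_univ, Nat.card_eq_fintype_card] using this


/-- ZFC-provable core of Theorem 3.5: with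
`H_p = Δ[f]E^k_0 ∪ Δ[f]E^k_1 ∪ Δ[f]E^k_2`:
(i) `Δ[f]E^k_1 = ∅`;
(ii) `H_p` has a nonempty subset summing to `0` iff some pair `(A', B')`, not both empty,
with `A' ⊆ Δ[f]E^k_0` and `B' ⊆ {y ∈ Δ[f]E^k_2 : y < e₀·k^k}`, has `∑A' + ∑B' = 0`;
(iii) the number of such pairs `(A', B')` is at most `2^{k^k} · (p^k)^t`. -/
theorem subset_sum_core (t k p : ℕ) (ht : 1 ≤ t) (hk : 2 ≤ k)
    (E : Finset ℕ) (hp : E.card = p) (hp2 : 2 ≤ p)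
    (e₀ : ℕ) (he₀ : e₀ = sInf (E : Set ℕ))
    (D : Set (Fin k → ℕ)) (f : (Fin k → ℕ) → ℕ) (hED : cube k E ⊆ D)
    (hrr : RegressivelyRegular f E)
    (γ : (Fin k → ℕ) → ℤ)
    (ρ : (Fin k → ℕ) → ℕ) (hρ : ∀ x ∈ cube k E, minT x ≤ ρ x)
    (hρ2 : ∀ x ∈ Eblock2 k f E, minT x < ρ x)
    (htlog : TLogBounded t k E ρ)
    (H : Set ℤ) (hH : H = Delta0 k f E ∪ Delta1 k γ f E ∪ Delta2 k ρ f E) :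
    Delta1 k γ f E = ∅ ∧
    ((∃ C : Finset ℤ, C.Nonempty ∧ ↑C ⊆ H ∧ ∑ c ∈ C, c = 0) ↔
      (∃ A' B' : Finset ℤ, ↑A' ⊆ Delta0 k f E ∧
        ↑B' ⊆ {y ∈ Delta2 k ρ f E | y < (e₀ : ℤ) * (k : ℤ) ^ k} ∧
        (A'.Nonempty ∨ B'.Nonempty) ∧ (∑ a ∈ A', a) + ∑ b ∈ B', b = 0)) ∧
    Nat.card {P : Finset ℤ × Finset ℤ // ↑P.1 ⊆ Delta0 k f E ∧
        ↑P.2 ⊆ {y ∈ Delta2 k ρ f E | y < (e₀ : ℤ) * (k : ℤ) ^ k}} ≤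
      2 ^ (k ^ k) * (p ^ k) ^ t := by
  classical
  have hkpos : 0 < k := by omega
  have hkk4 : 4 ≤ k ^ k := by
    calc 4 = 2 ^ 2 := by norm_num
    _ ≤ 2 ^ k := Nat.pow_le_pow_right (by norm_num) hk
    _ ≤ k ^ k := Nat.pow_le_pow_left hk k
  -- Part (i)
  have hE1 : Eblock1 k f E = ∅ := by
    ext x
    simp only [Eblock1, Set.mem_setOf_eq, Set.mem_empty_iff_false, iff_false]
    rintro ⟨hxc, hlo, hhi⟩
    rcases hrr x hxc with h | h
    · have := (h x hxc (fun i j => ⟨Iff.rfl, Iff.rfl⟩)).2; omega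
    · have := h x hxc (fun i j => ⟨Iff.rfl, Iff.rfl⟩); omega
  have hD1 : Delta1 k γ f E = ∅ := by
    ext z
    simp [Delta1, hE1]
  -- basic sign facts
  have hneg : ∀ z ∈ Delta0 k f E, -(e₀ : ℤ) ≤ z ∧ z < 0 := by
    rintro z ⟨x, ⟨hxc, hxf⟩, hz⟩
    subst hz
    rw [he₀]
    omega
  have hpos : ∀ z ∈ Delta2 k ρ f E, 1 ≤ z := by
    rintro z ⟨x, hx2, rfl⟩
    have := hρ2 x hx2
    omega
  obtain ⟨hfin0, hcard0⟩ := delta0_fin_card hkpos hrr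
  set S' : Set ℤ := {y ∈ Delta2 k ρ f E | y < (e₀ : ℤ) * (k : ℤ) ^ k} with hS'
  set T : Set ℕ := {d : ℕ | ∃ x ∈ cube k E, ρ x - minT x = d ∧ 0 < d ∧
      d < sInf (E : Set ℕ) * k ^ k} with hT
  have hcastK : ((e₀ * k ^ k : ℕ) : ℤ) = (e₀ : ℤ) * (k : ℤ) ^ k := by push_cast; ring
  have hTfin : T.Finite := by
    apply (Set.finite_Iio (sInf (E : Set ℕ) * k ^ k)).subset
    rintro d ⟨x, hx, hd, hd0, hdlt⟩
    exact hdlt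
  have hmapsS : ∀ y ∈ S', y.toNat ∈ T := by
    rintro y ⟨⟨x, hx2, rfl⟩, hylt⟩
    refine ⟨x, hx2.1, ?_, ?_, ?_⟩
    · have := hρ2 x hx2
      omega
    · have := hρ2 x hx2
      omega
    · have h1 := hρ2 x hx2
      rw [← he₀]
      omega
  have hinjS : Set.InjOn Int.toNat S' := by
    rintro a ha b hb hab
    have h1 := hpos a ha.1
    have h2 := hpos b hb.1
    omega
  have hfinS : S'.Finite := by
    apply Set.Finite.of_finite_image (hTfin.subset ?_) hinjS
    rintro _ ⟨y, hy, rfl⟩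
    exact hmapsS y hy
  have hcardS : S'.ncard ≤ T.ncard :=
    Set.ncard_le_ncard_of_injOn Int.toNat hmapsS hinjS hTfin
  have hSreal : (S'.ncard : ℝ) ≤ (t : ℝ) * Real.logb 2 ((p : ℝ) ^ k) := by
    have h := htlog
    unfold TLogBounded at h
    rw [hp] at h
    calc (S'.ncard : ℝ) ≤ (T.ncard : ℝ) := by exact_mod_cast hcardS
    _ ≤ _ := h
  have h2S : 2 ^ S'.ncard ≤ (p ^ k) ^ t := by
    have hppos : (0 : ℝ) < (p : ℝ) ^ k := by positivity
    have h1 : ((2 : ℕ) ^ S'.ncard : ℝ) ≤ (((p ^ k) ^ t : ℕ) : ℝ) := by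
      push_cast
      calc (2 : ℝ) ^ S'.ncard = (2 : ℝ) ^ ((S'.ncard : ℕ) : ℝ) :=
            (Real.rpow_natCast 2 _).symm
      _ ≤ (2 : ℝ) ^ ((t : ℝ) * Real.logb 2 ((p : ℝ) ^ k)) :=
            Real.rpow_le_rpow_of_exponent_le one_le_two hSreal
      _ = ((p : ℝ) ^ k) ^ ((t : ℕ) : ℝ) := by
            rw [mul_comm, Real.rpow_mul (by norm_num),
              Real.rpow_logb (by norm_num) (by norm_num) hppos]
      _ = ((p : ℝ) ^ k) ^ t := Real.rpow_natCast _ t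
    exact_mod_cast h1
  refine ⟨hD1, ?_, ?_⟩
  · -- Part (ii)
    constructor
    · rintro ⟨C, hCne, hCH, hCsum⟩
      set A' := C.filter (fun c => c < 0) with hA
      set B' := C.filter (fun c => ¬ c < 0) with hB
      have hsplit : (∑ a ∈ A', a) + ∑ b ∈ B', b = 0 := by
        rw [hA, hB, Finset.sum_filter_add_sum_filter_not, hCsum]
      have hCmem : ∀ c ∈ C, c ∈ Delta0 k f E ∨ c ∈ Delta2 k ρ f E := by
        intro c hc
        have := hCH hc
        rw [hH, hD1] at this
        simpa using this
      have hA0 : ↑A' ⊆ Delta0 k f E := by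
        intro c hc
        simp only [hA, Finset.coe_filter, Set.mem_setOf_eq] at hc
        rcases hCmem c hc.1 with h | h
        · exact h
        · have := hpos c h; omega
      have hB2 : ∀ c ∈ B', c ∈ Delta2 k ρ f E ∧ 1 ≤ c := by
        intro c hc
        rw [hB, Finset.mem_filter] at hc
        rcases hCmem c hc.1 with h | h
        · have := hneg c h; omega
        · exact ⟨h, hpos c h⟩
      have hcardA : A'.card ≤ k ^ k := by
        have h1 : ((A' : Set ℤ)).ncard ≤ (Delta0 k f E).ncard :=
          Set.ncard_le_ncard hA0 hfin0
        rw [Set.ncard_coe_finset] at h1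
        omega
      have hlbA : ∀ a ∈ A', -(e₀ : ℤ) ≤ a := fun a ha => (hneg a (hA0 ha)).1
      by_cases he0 : e₀ = 0
      · exfalso
        have hA'emp : A' = ∅ := by
          apply Finset.eq_empty_of_forall_notMem
          intro c hc
          have h1 := hneg c (hA0 hc)
          have h2 : c ∈ A' := hc
          rw [hA, Finset.mem_filter] at h2
          omega
        have hBsum : ∑ b ∈ B', b = 0 := by
          rw [hA'emp] at hsplit
          simpa using hsplit
        have hB'emp : B' = ∅ := by
          by_contra hne
          have h1 : 0 < ∑ b ∈ B', b :=
            Finset.sum_pos (fun i hi => by have := (hB2 i hi).2; omega)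
              (Finset.nonempty_of_ne_empty hne)
          omega
        obtain ⟨c, hc⟩ := hCne
        by_cases hcn : c < 0
        · have : c ∈ A' := by rw [hA, Finset.mem_filter]; exact ⟨hc, hcn⟩
          rw [hA'emp] at this; simp at this
        · have : c ∈ B' := by rw [hB, Finset.mem_filter]; exact ⟨hc, hcn⟩
          rw [hB'emp] at this; simp at this
      · have he1 : 1 ≤ e₀ := by omega
        have hsumA : -(e₀ : ℤ) * (k : ℤ) ^ k < ∑ a ∈ A', a := by
          have hnsmul : (A'.card : ℤ) * (-(e₀ : ℤ)) ≤ ∑ a ∈ A', a := by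
            have := Finset.card_nsmul_le_sum A' id (-(e₀ : ℤ)) hlbA
            simpa [nsmul_eq_mul] using this
          have hKcast : (((k ^ k : ℕ) : ℤ)) = (k : ℤ) ^ k := by push_cast; ring
          by_cases hlt : A'.card < k ^ k
          · have h1 : -(e₀ : ℤ) * (k : ℤ) ^ k < (A'.card : ℤ) * (-(e₀ : ℤ)) := by
              rw [← hKcast]
              have h2 : (A'.card : ℤ) ≤ ((k ^ k : ℕ) : ℤ) - 1 := by omega
              have h3 : (1 : ℤ) ≤ (e₀ : ℤ) := by exact_mod_cast he1
              nlinarith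
            linarith
          · have hcardeq : A'.card = k ^ k := by omega
            have h2 : 1 < A'.card := by omega
            obtain ⟨a, ha, b, hb, hab⟩ := Finset.one_lt_card.mp h2
            have hex : ∃ c ∈ A', -(e₀ : ℤ) < c := by
              rcases eq_or_ne a (-(e₀ : ℤ)) with h | h
              · refine ⟨b, hb, lt_of_le_of_ne (hlbA b hb) ?_⟩
                rw [← h]
                exact hab
              · exact ⟨a, ha, lt_of_le_of_ne (hlbA a ha) (Ne.symm h)⟩
            have hstrict : ∑ _a ∈ A', (-(e₀ : ℤ)) < ∑ a ∈ A', a :=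
              Finset.sum_lt_sum hlbA hex
            rw [Finset.sum_const, hcardeq] at hstrict
            calc -(e₀ : ℤ) * (k : ℤ) ^ k = (k ^ k : ℕ) • (-(e₀ : ℤ)) := by
                  simp [nsmul_eq_mul]; push_cast; ring
            _ < ∑ a ∈ A', a := hstrict
        have hsumB : ∑ b ∈ B', b < (e₀ : ℤ) * (k : ℤ) ^ k := by linarith
        have hBS : ↑B' ⊆ S' := by
          intro c hc
          have hc' : c ∈ B' := hc
          refine ⟨(hB2 c hc').1, ?_⟩
          have hle : c ≤ ∑ b ∈ B', b := by
            simpa using Finset.single_le_sum (f := fun x => x)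
              (fun i hi => by show (0:ℤ) ≤ i; have := (hB2 i hi).2; omega) hc'
          omega
        have hnonempty : A'.Nonempty ∨ B'.Nonempty := by
          obtain ⟨c, hc⟩ := hCne
          by_cases hcn : c < 0
          · exact Or.inl ⟨c, by rw [hA, Finset.mem_filter]; exact ⟨hc, hcn⟩⟩
          · exact Or.inr ⟨c, by rw [hB, Finset.mem_filter]; exact ⟨hc, hcn⟩⟩
        exact ⟨A', B', hA0, hBS, hnonempty, hsplit⟩
    · rintro ⟨A', B', hA0, hBS, hne, hsum⟩
      have hdisj : Disjoint A' B' := by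
        rw [Finset.disjoint_left]
        intro a haA haB
        have h1 := hneg a (hA0 haA)
        have h2 := hpos a (hBS haB).1
        omega
      refine ⟨A' ∪ B', ?_, ?_, ?_⟩
      · rcases hne with h | h
        · exact h.mono Finset.subset_union_left
        · exact h.mono Finset.subset_union_right
      · intro c hc
        rw [hH]
        rw [Finset.coe_union, Set.mem_union] at hc
        rcases hc with h | h
        · exact Or.inl (Or.inl (hA0 h))
        · exact Or.inr (hBS h).1
      · rw [Finset.sum_union hdisj, hsum]
  · -- Part (iii)
    have heq : Nat.card {P : Finset ℤ × Finset ℤ // ↑P.1 ⊆ Delta0 k f E ∧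
        ↑P.2 ⊆ {y ∈ Delta2 k ρ f E | y < (e₀ : ℤ) * (k : ℤ) ^ k}} =
        ({P : Finset ℤ × Finset ℤ | ↑P.1 ⊆ Delta0 k f E ∧ ↑P.2 ⊆ S'}).ncard :=
      Nat.card_coe_set_eq _
    rw [heq]
    set G := hfin0.toFinset.powerset ×ˢ hfinS.toFinset.powerset with hG
    have hsub : {P : Finset ℤ × Finset ℤ | ↑P.1 ⊆ Delta0 k f E ∧ ↑P.2 ⊆ S'} ⊆ ↑G := by
      rintro ⟨a, b⟩ ⟨h1, h2⟩
      rw [hG]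
      simp only [Finset.coe_product, Set.mem_prod, Finset.mem_coe,
        Finset.mem_powerset]
      constructor
      · intro x hx
        rw [Set.Finite.mem_toFinset]
        exact h1 hx
      · intro x hx
        rw [Set.Finite.mem_toFinset]
        exact h2 hx
    calc ({P : Finset ℤ × Finset ℤ | ↑P.1 ⊆ Delta0 k f E ∧ ↑P.2 ⊆ S'}).ncard
        ≤ (↑G : Set (Finset ℤ × Finset ℤ)).ncard :=
          Set.ncard_le_ncard hsub G.finite_toSet
    _ = G.card := Set.ncard_coe_finset G
    _ = 2 ^ (Delta0 k f E).ncard * 2 ^ S'.ncard := by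
          rw [hG, Finset.card_product, Finset.card_powerset, Finset.card_powerset,
            Set.ncard_eq_toFinset_card _ hfin0, Set.ncard_eq_toFinset_card _ hfinS]
    _ ≤ 2 ^ (k ^ k) * (p ^ k) ^ t :=
          Nat.mul_le_mul (Nat.pow_le_pow_right (by norm_num) hcard0) h2S
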